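/- arXiv:1903.08957 — 2 statements merged into one kernel-verified Lean document; each statement's English description precedes it below -/
import Mathlib

section
/- Fix y ∈ ℝⁿ, a vector θ ∈ ℝᵐ, an invertible m×m matrix σ_p, an n×m matrix σ_f, reals v_x ≠ 0 and v_xx with v_xx - v_x² < 0, and vectors v_y ∈ ℝⁿ, v_xy ∈ ℝⁿ being columns contracted appropriately. Consider the quadratic function F(π) = ((v_xx - v_x²)/2)·πᵀσ_pσ_pᵀπ + πᵀ(σ_p θ v_x + σ_p σ_fᵀ(v_xy - v_x v_y)) over π ∈ ℝᵐ, where σ_pσ_pᵀ is positive definite. Then F attains its unique global maximum at π̌ = -(σ_pᵀ)⁻¹ · ((θ - σ_fᵀ v_y) v_x + σ_fᵀ v_xy)/(v_xx - v_x²), and the maximum value equals -|(θ - σ_fᵀ v_y) v_x + σ_fᵀ v_xy|² / (2(v_xx - v_x²)). -/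
open Matrix

private lemma complete_square {m : ℕ} (c : ℝ) (hc0 : c ≠ 0) (u w : Fin m → ℝ) :
    (c / 2) * (u ⬝ᵥ u) + u ⬝ᵥ w
      = (c / 2) * ((u + c⁻¹ • w) ⬝ᵥ (u + c⁻¹ • w)) - (w ⬝ᵥ w) / (2 * c) := by
  rw [add_dotProduct, dotProduct_add, dotProduct_add,
    smul_dotProduct, dotProduct_smul, dotProduct_smul,
    dotProduct_comm w u]
  simp only [smul_eq_mul, smul_dotProduct]
  field_simp
  ring

/-- the quadratic function
`F(π) = ((v_xx - v_x²)/2)·πᵀσ_pσ_pᵀπ + πᵀ(σ_pθ v_x + σ_pσ_fᵀ(v_xy - v_x v_y))`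
with `v_xx - v_x² < 0` and `σ_p` invertible attains its unique global maximum at
`π̌ = -(σ_pᵀ)⁻¹((θ - σ_fᵀ v_y)v_x + σ_fᵀ v_xy)/(v_xx - v_x²)`, with maximum value
`-|(θ - σ_fᵀ v_y)v_x + σ_fᵀ v_xy|²/(2(v_xx - v_x²))`. -/
theorem stmt_1 {m n : ℕ}
    (θ : Fin m → ℝ) (σp : Matrix (Fin m) (Fin m) ℝ) (σf : Matrix (Fin n) (Fin m) ℝ)
    (vx vxx : ℝ) (vy vxy : Fin n → ℝ)
    (hvx : vx ≠ 0) (hconc : vxx - vx ^ 2 < 0) (hinv : IsUnit σp.det)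
    (hpd : (σp * σpᵀ).PosDef)
    (F : (Fin m → ℝ) → ℝ)
    (hF : ∀ π : Fin m → ℝ,
      F π = ((vxx - vx ^ 2) / 2) * (π ⬝ᵥ (σp * σpᵀ).mulVec π)
        + π ⬝ᵥ (vx • σp.mulVec θ + (σp * σfᵀ).mulVec (vxy - vx • vy))) :
    let w : Fin m → ℝ := vx • (θ - σfᵀ.mulVec vy) + σfᵀ.mulVec vxy
    let πcheck : Fin m → ℝ := (-(vxx - vx ^ 2)⁻¹) • (σpᵀ)⁻¹.mulVec w
    (∀ π : Fin m → ℝ, π ≠ πcheck → F π < F πcheck) ∧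
    F πcheck = -(w ⬝ᵥ w) / (2 * (vxx - vx ^ 2)) := by
  intro w πcheck
  set c := vxx - vx ^ 2 with hc
  have hc0 : c ≠ 0 := ne_of_lt hconc
  have hinvT : IsUnit σpᵀ.det := by rwa [Matrix.det_transpose]
  have hpk : σpᵀ.mulVec πcheck = (-c⁻¹) • w := by
    show σpᵀ.mulVec ((-c⁻¹) • (σpᵀ)⁻¹.mulVec w) = (-c⁻¹) • w
    rw [Matrix.mulVec_smul, Matrix.mulVec_mulVec, Matrix.mul_nonsing_inv _ hinvT,
      Matrix.one_mulVec]
  have hF' : ∀ π : Fin m → ℝ,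
      F π = (c / 2) * (σpᵀ.mulVec π ⬝ᵥ σpᵀ.mulVec π) + σpᵀ.mulVec π ⬝ᵥ w := by
    intro π
    rw [hF]
    have h1 : π ⬝ᵥ (σp * σpᵀ).mulVec π = σpᵀ.mulVec π ⬝ᵥ σpᵀ.mulVec π := by
      rw [← Matrix.mulVec_mulVec, Matrix.dotProduct_mulVec, ← Matrix.mulVec_transpose]
    have h2 : π ⬝ᵥ (vx • σp.mulVec θ + (σp * σfᵀ).mulVec (vxy - vx • vy))
        = σpᵀ.mulVec π ⬝ᵥ w := by
      have hw : w = vx • θ + σfᵀ.mulVec (vxy - vx • vy) := by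
        show vx • (θ - σfᵀ.mulVec vy) + σfᵀ.mulVec vxy = _
        rw [Matrix.mulVec_sub, Matrix.mulVec_smul, smul_sub]
        abel
      have hb : vx • σp.mulVec θ + (σp * σfᵀ).mulVec (vxy - vx • vy) = σp.mulVec w := by
        rw [hw, ← Matrix.mulVec_mulVec, ← Matrix.mulVec_smul, ← Matrix.mulVec_add]
      rw [hb, Matrix.dotProduct_mulVec, ← Matrix.mulVec_transpose]
    rw [h1, h2]
  have hFcheck : F πcheck = -(w ⬝ᵥ w) / (2 * c) := by
    rw [hF', complete_square c hc0, hpk]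
    have h0 : (-c⁻¹) • w + c⁻¹ • w = 0 := by rw [neg_smul]; abel
    rw [h0]
    simp [neg_div]
  refine ⟨?_, hFcheck⟩
  intro π hπ
  have hd : σpᵀ.mulVec π + c⁻¹ • w ≠ 0 := by
    intro h
    apply hπ
    have h1 : σpᵀ.mulVec π = σpᵀ.mulVec πcheck := by
      rw [hpk, neg_smul, eq_neg_iff_add_eq_zero, h]
    have h2 := congrArg ((σpᵀ)⁻¹.mulVec) h1
    simpa [Matrix.mulVec_mulVec, Matrix.nonsing_inv_mul _ hinvT] using h2
  set d := σpᵀ.mulVec π + c⁻¹ • w with hdd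
  have hdpos : 0 < d ⬝ᵥ d := by
    rcases Function.ne_iff.mp hd with ⟨i, hi⟩
    have hnn : ∀ j ∈ Finset.univ, 0 ≤ d j * d j := fun j _ => mul_self_nonneg _
    calc 0 < d i * d i := mul_self_pos.mpr hi
      _ ≤ ∑ j, d j * d j := Finset.single_le_sum hnn (Finset.mem_univ i)
      _ = d ⬝ᵥ d := rfl
  rw [hF' π, complete_square c hc0, hFcheck, ← hdd]
  rw [neg_div]
  have hneg : (c / 2) * (d ⬝ᵥ d) < 0 := mul_neg_of_neg_of_pos (by linarith) hdpos
  linarith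
end

section
/- Let η : [0,T] × ℝⁿ → ℝ with η < α solve ∂η/∂t + (1/2)tr(σ_fσ_f* D²η) + (g - σ_fθ)* Dη - (1/(η-α))(Dη)* σ_fσ_f* Dη - r(α-η) = 0 with η(T,·) = 0. Then η̃ := 1/(α-η) solves the linear PDE ∂η̃/∂t + (g - σ_fθ)* Dη̃ + (1/2)tr(σ_fσ_f* D²η̃) - r·η̃ = 0 with η̃(T,·) = 1/α. -/
open Matrix

/-- Gradient in `y` of a function on `ℝⁿ`, as a vector of partial derivatives. -/
noncomputable def grad {n : ℕ} (f : (Fin n → ℝ) → ℝ) (y : Fin n → ℝ) : Fin n → ℝ :=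
  fun i => fderiv ℝ f y (Pi.single i 1)

/-- Hessian in `y` of a function on `ℝⁿ`, as a matrix of second partial derivatives. -/
noncomputable def hess {n : ℕ} (f : (Fin n → ℝ) → ℝ) (y : Fin n → ℝ) :
    Matrix (Fin n) (Fin n) ℝ :=
  Matrix.of fun i j => fderiv ℝ (fun y' => fderiv ℝ f y' (Pi.single j 1)) y (Pi.single i 1)

lemma hasG {n : ℕ} {α : ℝ} {f : (Fin n → ℝ) → ℝ} (hf : ContDiff ℝ 2 f)
    (hne : ∀ z, α - f z ≠ 0) (z : Fin n → ℝ) :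
    HasFDerivAt (fun w => (α - f w)⁻¹) (((α - f z) ^ 2)⁻¹ • fderiv ℝ f z) z := by
  have hd : HasFDerivAt f (fderiv ℝ f z) z :=
    ((hf.differentiable (by norm_num)).differentiableAt).hasFDerivAt
  have h1 : HasFDerivAt (fun w => α - f w) (-(fderiv ℝ f z)) z := hd.const_sub α
  have h2 := (hasDerivAt_inv (hne z)).comp_hasFDerivAt z h1
  have : (-(((α - f z)) ^ 2)⁻¹) • (-(fderiv ℝ f z)) = ((α - f z) ^ 2)⁻¹ • fderiv ℝ f z := by
    simp
  rw [← this]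
  exact h2

lemma grad_inv {n : ℕ} {α : ℝ} {f : (Fin n → ℝ) → ℝ} (hf : ContDiff ℝ 2 f)
    (hne : ∀ z, α - f z ≠ 0) (y : Fin n → ℝ) :
    grad (fun z => (α - f z)⁻¹) y = ((α - f y) ^ 2)⁻¹ • grad f y := by
  funext i
  simp only [grad, (hasG hf hne y).fderiv, ContinuousLinearMap.smul_apply, smul_eq_mul,
    Pi.smul_apply]

lemma hess_inv {n : ℕ} {α : ℝ} {f : (Fin n → ℝ) → ℝ} (hf : ContDiff ℝ 2 f)
    (hne : ∀ z, α - f z ≠ 0) (y : Fin n → ℝ) (i j : Fin n) :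
    hess (fun z => (α - f z)⁻¹) y i j
      = ((α - f y) ^ 2)⁻¹ * hess f y i j
        + 2 * ((α - f y) ^ 3)⁻¹ * grad f y i * grad f y j := by
  have hΦ : (fun z => fderiv ℝ (fun w => (α - f w)⁻¹) z (Pi.single j 1))
      = fun z => ((α - f z) ^ 2)⁻¹ * fderiv ℝ f z (Pi.single j 1) := by
    funext z
    rw [(hasG hf hne z).fderiv]
    simp
  have hd : HasFDerivAt f (fderiv ℝ f y) y :=
    ((hf.differentiable (by norm_num)).differentiableAt).hasFDerivAt
  have h1 : HasFDerivAt (fun w => α - f w) (-(fderiv ℝ f y)) y := hd.const_sub α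
  have hApow : HasDerivAt (fun t : ℝ => (t ^ 2)⁻¹)
      (-(↑2 * (α - f y) ^ 1) / ((α - f y) ^ 2) ^ 2) (α - f y) := by
    have := (hasDerivAt_pow 2 (α - f y)).inv (pow_ne_zero 2 (hne y))
    simpa [Pi.inv_def] using this
  have hA : HasFDerivAt (fun z => ((α - f z) ^ 2)⁻¹)
      ((-(↑2 * (α - f y) ^ 1) / ((α - f y) ^ 2) ^ 2) • (-(fderiv ℝ f y))) y :=
    by have := hApow.comp_hasFDerivAt y h1; exact this
  have hBdiff : Differentiable ℝ (fun z => fderiv ℝ f z (Pi.single j 1)) := by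
    have : ContDiff ℝ 1 (fun z => fderiv ℝ f z (Pi.single j 1)) :=
      (hf.fderiv_right (by norm_num)).clm_apply contDiff_const
    exact this.differentiable (by norm_num)
  have hB : HasFDerivAt (fun z => fderiv ℝ f z (Pi.single j 1))
      (fderiv ℝ (fun z => fderiv ℝ f z (Pi.single j 1)) y) y :=
    (hBdiff y).hasFDerivAt
  have hAB := hA.mul hB
  have : hess (fun z => (α - f z)⁻¹) y i j
      = (((α - f y) ^ 2)⁻¹ • fderiv ℝ (fun z => fderiv ℝ f z (Pi.single j 1)) y
        + (fderiv ℝ f y (Pi.single j 1)) •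
          ((-(↑2 * (α - f y) ^ 1) / ((α - f y) ^ 2) ^ 2) • (-(fderiv ℝ f y)))) (Pi.single i 1) := by
    show fderiv ℝ (fun z => fderiv ℝ (fun w => (α - f w)⁻¹) z (Pi.single j 1)) y (Pi.single i 1) = _
    rw [hΦ, show (fun z => ((α - f z) ^ 2)⁻¹ * fderiv ℝ f z (Pi.single j 1)) = ((fun z => ((α - f z) ^ 2)⁻¹) * fun z => fderiv ℝ f z (Pi.single j 1)) from rfl, hAB.fderiv]
  rw [this]
  simp only [ContinuousLinearMap.add_apply, ContinuousLinearMap.smul_apply,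
    ContinuousLinearMap.neg_apply, smul_eq_mul, hess, grad, Matrix.of_apply]
  have h0 := hne y
  field_simp

/-- if `η < α` solves
`∂η/∂t + ½tr(σ_fσ_f* D²η) + (g - σ_fθ)*Dη - (1/(η-α))(Dη)*σ_fσ_f*Dη - r(α-η) = 0`,
`η(T,·) = 0`, then `η̃ = 1/(α-η)` solves the linear PDE
`∂η̃/∂t + (g - σ_fθ)*Dη̃ + ½tr(σ_fσ_f* D²η̃) - r·η̃ = 0`, `η̃(T,·) = 1/α`. -/
theorem stmt_5 {n m : ℕ} (T α : ℝ) (hT : 0 < T) (hα : 0 < α)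
    (σf : (Fin n → ℝ) → Matrix (Fin n) (Fin m) ℝ) (g : (Fin n → ℝ) → Fin n → ℝ)
    (θ : (Fin n → ℝ) → Fin m → ℝ) (r : (Fin n → ℝ) → ℝ)
    (η : ℝ → (Fin n → ℝ) → ℝ)
    (hη_lt : ∀ t y, η t y < α)
    (hη_smooth : ContDiff ℝ 2 (fun p : ℝ × (Fin n → ℝ) => η p.1 p.2))
    (hPDE : ∀ (t : ℝ) (y : Fin n → ℝ),
      deriv (fun s => η s y) t
        + (1 / 2) * Matrix.trace (σf y * (σf y)ᵀ * hess (η t) y)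
        + (g y - (σf y).mulVec (θ y)) ⬝ᵥ grad (η t) y
        - (1 / (η t y - α)) * (grad (η t) y ⬝ᵥ (σf y * (σf y)ᵀ).mulVec (grad (η t) y))
        - r y * (α - η t y) = 0)
    (hterm : ∀ y, η T y = 0) :
    (∀ (t : ℝ) (y : Fin n → ℝ),
      deriv (fun s => (α - η s y)⁻¹) t
        + (g y - (σf y).mulVec (θ y)) ⬝ᵥ grad (fun y' => (α - η t y')⁻¹) y
        + (1 / 2) * Matrix.trace (σf y * (σf y)ᵀ * hess (fun y' => (α - η t y')⁻¹) y)
        - r y * (α - η t y)⁻¹ = 0) ∧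
    ∀ y, (α - η T y)⁻¹ = α⁻¹ := by
  constructor
  · intro t y
    have hf : ContDiff ℝ 2 (η t) := hη_smooth.comp (contDiff_const.prodMk contDiff_id)
    have hne : ∀ z, α - η t z ≠ 0 := fun z => sub_ne_zero_of_ne (hη_lt t z).ne'
    -- time derivative
    have hts : ContDiff ℝ 2 (fun s => η s y) := hη_smooth.comp (contDiff_id.prodMk contDiff_const)
    have hd : HasDerivAt (fun s => η s y) (deriv (fun s => η s y) t) t :=
      ((hts.differentiable (by norm_num)).differentiableAt).hasDerivAt
    have h1 : HasDerivAt (fun s => α - η s y) (-(deriv (fun s => η s y) t)) t :=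
      hd.const_sub α
    have h2 : HasDerivAt (fun s => (α - η s y)⁻¹)
        (-(-(deriv (fun s => η s y) t)) / (α - η t y) ^ 2) t := h1.inv (hne y)
    have hderiv : deriv (fun s => (α - η s y)⁻¹) t
        = deriv (fun s => η s y) t / (α - η t y) ^ 2 := by
      rw [h2.deriv]; ring
    -- gradient
    have hgrad := grad_inv (α := α) hf hne y
    -- dot product term
    have hdot : (g y - (σf y).mulVec (θ y)) ⬝ᵥ grad (fun y' => (α - η t y')⁻¹) y
        = ((α - η t y) ^ 2)⁻¹ * ((g y - (σf y).mulVec (θ y)) ⬝ᵥ grad (η t) y) := by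
      rw [hgrad, dotProduct_smul, smul_eq_mul]
    -- trace term
    have htr : Matrix.trace (σf y * (σf y)ᵀ * hess (fun y' => (α - η t y')⁻¹) y)
        = ((α - η t y) ^ 2)⁻¹ * Matrix.trace (σf y * (σf y)ᵀ * hess (η t) y)
          + 2 * ((α - η t y) ^ 3)⁻¹ *
            (grad (η t) y ⬝ᵥ (σf y * (σf y)ᵀ).mulVec (grad (η t) y)) := by
      simp only [Matrix.trace, Matrix.diag_apply, Matrix.mul_apply, dotProduct,
        Matrix.mulVec, hess_inv (α := α) hf hne y, Finset.mul_sum]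
      rw [← Finset.sum_add_distrib]
      refine Finset.sum_congr rfl fun i _ => ?_
      rw [← Finset.sum_add_distrib]
      refine Finset.sum_congr rfl fun j _ => ?_
      ring
    have key := hPDE t y
    have h0 : α - η t y ≠ 0 := hne y
    have h0' : η t y - α ≠ 0 := sub_ne_zero_of_ne (hη_lt t y).ne
    rw [hderiv, hdot, htr]
    have hq : grad (η t) y ⬝ᵥ (σf y * (σf y)ᵀ).mulVec (grad (η t) y)
        = (η t y - α) * (deriv (fun s => η s y) t
            + (1 / 2) * Matrix.trace (σf y * (σf y)ᵀ * hess (η t) y)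
            + (g y - (σf y).mulVec (θ y)) ⬝ᵥ grad (η t) y
            - r y * (α - η t y)) := by
      simp only [sub_dotProduct] at key ⊢
      field_simp at key
      linear_combination (-1/2 : ℝ) * key
    rw [hq]
    simp only [sub_dotProduct]
    field_simp
    ring
  · intro y
    rw [hterm y, sub_zero]
end
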